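/- For all e, ė ∈ ℝᵐ, the quadratic forms agree: (e, ė)ᵀ Λ (e, ė) = (ε e, k ė)ᵀ Λ_{B_e} (ε e, k ė). Consequently, if Λ_{B_e} is positive definite then (e, ė)ᵀ Λ (e, ė) > 0 whenever (e, ė) ≠ 0. -/

import Mathlib

open Matrix

/-- With `α = ε/(k(1+|e|))`, `k_p = ε²`, `k_d = εk`, the quadratic forms
of the block matrices `Λ` and `Λ_{B_e}` agree:
`(e, ė)ᵀ Λ (e, ė) = (ε e, k ė)ᵀ Λ_{B_e} (ε e, k ė)`; consequently, if `Λ_{B_e}` is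
positive definite then `(e, ė)ᵀ Λ (e, ė) > 0` whenever `(e, ė) ≠ 0`. -/
theorem stmt_9 {m : ℕ} (hm : 1 ≤ m)
    (Be : Matrix (Fin m) (Fin m) ℝ) (ε k : ℝ) (hε : 0 < ε) (hk : 0 < k)
    (e e' : Fin m → ℝ) (α k_p k_d : ℝ)
    (hα : α = ε / (k * (1 + Real.sqrt (e ⬝ᵥ e))))
    (hkp : k_p = ε ^ 2) (hkd : k_d = ε * k)
    (Λ ΛBe : Matrix (Fin m ⊕ Fin m) (Fin m ⊕ Fin m) ℝ)
    (hΛ : Λ = Matrix.fromBlocks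
      (k_p • (Be + Beᵀ))
      (α⁻¹ • (k_p • (Beᵀ - 1) + (α * k_d) • Be))
      (α⁻¹ • (k_p • (Be - 1) + (α * k_d) • Beᵀ))
      (α⁻¹ • (k_d • (Be + Beᵀ))))
    (hΛBe : ΛBe = Matrix.fromBlocks
      (Be + Beᵀ)
      (Be + (1 + Real.sqrt (e ⬝ᵥ e)) • (Beᵀ - 1))
      (Beᵀ + (1 + Real.sqrt (e ⬝ᵥ e)) • (Be - 1))
      ((1 + Real.sqrt (e ⬝ᵥ e)) • (Be + Beᵀ))) :
    (Sum.elim e e') ⬝ᵥ (Λ *ᵥ Sum.elim e e') =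
      (Sum.elim (ε • e) (k • e')) ⬝ᵥ (ΛBe *ᵥ Sum.elim (ε • e) (k • e')) ∧
    (ΛBe.PosDef → ¬(e = 0 ∧ e' = 0) →
      0 < (Sum.elim e e') ⬝ᵥ (Λ *ᵥ Sum.elim e e')) := by
  set s := Real.sqrt (e ⬝ᵥ e) with hs
  have hs0 : 0 ≤ s := Real.sqrt_nonneg _
  have h1s : (0:ℝ) < 1 + s := by linarith
  have hα0 : α ≠ 0 := by
    rw [hα]
    positivity
  have key : (Sum.elim e e') ⬝ᵥ (Λ *ᵥ Sum.elim e e') =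
      (Sum.elim (ε • e) (k • e')) ⬝ᵥ (ΛBe *ᵥ Sum.elim (ε • e) (k • e')) := by
    subst hΛ hΛBe hkp hkd hα
    simp only [fromBlocks_mulVec, sumElim_dotProduct_sumElim, add_mulVec, sub_mulVec,
      smul_mulVec, dotProduct_add, dotProduct_smul, one_mulVec, dotProduct_sub, mulVec_smul,
      smul_dotProduct, smul_eq_mul, Sum.elim_comp_inl, Sum.elim_comp_inr]
    field_simp
    ring
  refine ⟨key, fun hPD hne => ?_⟩
  rw [key]
  have hx : Sum.elim (ε • e) (k • e') ≠ 0 := by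
    intro h
    apply hne
    constructor
    · funext i
      have := congrFun h (Sum.inl i)
      simp at this
      rcases this with h' | h'
      · exact absurd h' (ne_of_gt hε)
      · exact h'
    · funext i
      have := congrFun h (Sum.inr i)
      simp at this
      rcases this with h' | h'
      · exact absurd h' (ne_of_gt hk)
      · exact h'
  have := hPD.dotProduct_mulVec_pos hx
  simpa using this
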